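/- Let A be an n×n symmetric positive semidefinite matrix with a partial Cholesky factorization Πᵀ A Π = L Lᵀ + [[0,0],[0,S]] where L ∈ ℝ^{n×k} has its first k rows lower triangular and S is the (n−k)×(n−k) Schur complement. Then the approximation error satisfies ‖Πᵀ A Π − L Lᵀ‖₂ = ‖S‖₂ ≥ λ_{k+1}(A), where λ_{k+1}(A) is the (k+1)-st largest eigenvalue of A. -/

import Mathlib

open Matrix

/-- The `j`-th largest eigenvalue (0-based index `j`) of a Hermitian matrix. -/
noncomputable def eigDesc {n : ℕ} {A : Matrix (Fin n) (Fin n) ℝ} (hA : A.IsHermitian)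
    (j : Fin n) : ℝ :=
  (hA.eigenvalues ∘ Tuple.sort hA.eigenvalues) j.rev

/-- The spectral norm (largest singular value) of a real matrix. -/
noncomputable def specNorm {m n : ℕ} (X : Matrix (Fin m) (Fin n) ℝ) : ℝ :=
  Real.sqrt (⨆ j, (Matrix.isHermitian_conjTranspose_mul_self X).eigenvalues j)

/-- The `j`-th largest singular value (0-based index `j`) of a real matrix. -/
noncomputable def sval {m k : ℕ} (X : Matrix (Fin m) (Fin k) ℝ) (j : Fin k) : ℝ :=
  Real.sqrt (eigDesc (Matrix.isHermitian_conjTranspose_mul_self X) j)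


lemma conjT_eq {a b : ℕ} (M : Matrix (Fin a) (Fin b) ℝ) : Mᴴ = Mᵀ := by
  ext i j; simp

variable {N : ℕ} {A : Matrix (Fin N) (Fin N) ℝ}

/-- coordinates of `x` in the eigenbasis -/
noncomputable def coord (hA : A.IsHermitian) (x : Fin N → ℝ) (j : Fin N) : ℝ :=
  ⇑(hA.eigenvectorBasis j) ⬝ᵥ x

lemma starU_mulVec (hA : A.IsHermitian) (x : Fin N → ℝ) :
    (star (hA.eigenvectorUnitary : Matrix (Fin N) (Fin N) ℝ)) *ᵥ x = coord hA x := by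
  funext j
  simp [mulVec, coord, dotProduct, star_apply]

lemma transpose_mulVec_dot (M : Matrix (Fin N) (Fin N) ℝ) (y z : Fin N → ℝ) :
    (Mᵀ *ᵥ y) ⬝ᵥ z = y ⬝ᵥ (M *ᵥ z) := by
  rw [Matrix.mulVec_transpose, Matrix.dotProduct_mulVec]

lemma star_eq_transpose_real (M : Matrix (Fin N) (Fin N) ℝ) : star M = Mᵀ := rfl

lemma dot_self_eq_sum_coord (hA : A.IsHermitian) (x : Fin N → ℝ) :
    x ⬝ᵥ x = ∑ j, (coord hA x j) ^ 2 := by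
  have h : (coord hA x) ⬝ᵥ (coord hA x) = x ⬝ᵥ x := by
    rw [← starU_mulVec hA x, star_eq_transpose_real, transpose_mulVec_dot,
      Matrix.mulVec_mulVec]
    have hU : (hA.eigenvectorUnitary : Matrix (Fin N) (Fin N) ℝ) *
        (hA.eigenvectorUnitary : Matrix (Fin N) (Fin N) ℝ)ᵀ = 1 := by
      have := (Matrix.mem_unitaryGroup_iff).mp (hA.eigenvectorUnitary).2
      rw [star_eq_transpose_real] at this
      exact this
    rw [hU, Matrix.one_mulVec]
  rw [← h]
  simp [dotProduct, sq]

lemma rayleigh_expand (hA : A.IsHermitian) (x : Fin N → ℝ) :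
    x ⬝ᵥ (A *ᵥ x) = ∑ j, hA.eigenvalues j * (coord hA x j) ^ 2 := by
  conv_lhs => rw [hA.spectral_theorem, Unitary.conjStarAlgAut_apply]
  rw [← Matrix.mulVec_mulVec, ← Matrix.mulVec_mulVec, starU_mulVec hA x]
  have h2 : ∀ (M : Matrix (Fin N) (Fin N) ℝ) (w : Fin N → ℝ),
      x ⬝ᵥ (M *ᵥ w) = (Mᵀ *ᵥ x) ⬝ᵥ w := fun M w =>
    (transpose_mulVec_dot M x w).symm
  rw [h2, ← star_eq_transpose_real, starU_mulVec hA]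
  simp [Matrix.mulVec_diagonal, dotProduct, sq]
  ring_nf
  congr 1
  funext j
  ring

lemma rayleigh_le_supEig (hA : A.IsHermitian) (x : Fin N → ℝ) :
    x ⬝ᵥ (A *ᵥ x) ≤ (⨆ j, hA.eigenvalues j) * (x ⬝ᵥ x) := by
  rw [rayleigh_expand hA, dot_self_eq_sum_coord hA, Finset.mul_sum]
  apply Finset.sum_le_sum
  intro j _
  exact mul_le_mul_of_nonneg_right
    (le_ciSup (Set.Finite.bddAbove (Set.finite_range _)) j) (sq_nonneg _)

lemma exists_max_eig (hN : 0 < N) (hA : A.IsHermitian) :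
    ∃ j₀, hA.eigenvalues j₀ = ⨆ j, hA.eigenvalues j := by
  have : Nonempty (Fin N) := ⟨⟨0, hN⟩⟩
  obtain ⟨j₀, hj₀⟩ := Finite.exists_max hA.eigenvalues
  exact ⟨j₀, le_antisymm (le_ciSup (Set.Finite.bddAbove (Set.finite_range _)) j₀) (ciSup_le hj₀)⟩

lemma eigvec_dot_self (hA : A.IsHermitian) (j : Fin N) :
    ⇑(hA.eigenvectorBasis j) ⬝ᵥ ⇑(hA.eigenvectorBasis j) = 1 := by
  have h := hA.eigenvectorBasis.orthonormal.1 j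
  have h2 : (inner ℝ (hA.eigenvectorBasis j) (hA.eigenvectorBasis j) : ℝ) = 1 := by
    rw [real_inner_self_eq_norm_sq, h]; norm_num
  rw [← h2, PiLp.inner_apply]
  simp [dotProduct, RCLike.inner_apply, sq]

lemma exists_unit_rayleigh_eq_sup (hN : 0 < N) (hA : A.IsHermitian) :
    ∃ x : Fin N → ℝ, x ⬝ᵥ x = 1 ∧ x ⬝ᵥ (A *ᵥ x) = ⨆ j, hA.eigenvalues j := by
  obtain ⟨j₀, hj₀⟩ := exists_max_eig hN hA
  refine ⟨⇑(hA.eigenvectorBasis j₀), eigvec_dot_self hA j₀, ?_⟩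
  rw [hA.mulVec_eigenvectorBasis]
  simp [dotProduct_smul, smul_eq_mul, dotProduct, ← hj₀]
  have := eigvec_dot_self hA j₀
  simp [dotProduct] at this
  rw [show ∀ a b : Fin N → ℝ, (∑ i, a i * (hA.eigenvalues j₀ * b i)) = hA.eigenvalues j₀ * ∑ i, a i * b i from fun a b => by rw [Finset.mul_sum]; congr 1; funext i; ring]
  rw [this, mul_one]

lemma dot_reindex_sum {k m : ℕ} (F : Matrix (Fin k ⊕ Fin m) (Fin k ⊕ Fin m) ℝ)
    (w : Fin (k+m) → ℝ) :
    w ⬝ᵥ ((Matrix.reindex finSumFinEquiv finSumFinEquiv F) *ᵥ w) =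
      ∑ a, ∑ b, w (finSumFinEquiv a) * (F a b * w (finSumFinEquiv b)) := by
  simp only [Matrix.reindex_apply, dotProduct, mulVec, Matrix.submatrix_apply, Finset.mul_sum]
  rw [← Equiv.sum_comp finSumFinEquiv (fun x => ∑ y, w x *
    (F (finSumFinEquiv.symm x) (finSumFinEquiv.symm y) * w y))]
  simp only [Equiv.symm_apply_apply]
  refine Finset.sum_congr rfl (fun a _ => ?_)
  rw [← Equiv.sum_comp finSumFinEquiv
    (fun y => w (finSumFinEquiv a) * (F a (finSumFinEquiv.symm y) * w y))]
  simp

lemma block_rayleigh {k m : ℕ} (M : Matrix (Fin m) (Fin m) ℝ) (w : Fin (k+m) → ℝ) :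
    w ⬝ᵥ ((Matrix.reindex finSumFinEquiv finSumFinEquiv
      (Matrix.fromBlocks (0 : Matrix (Fin k) (Fin k) ℝ) 0 0 M)) *ᵥ w) =
    (fun j => w (finSumFinEquiv (Sum.inr j))) ⬝ᵥ
      (M *ᵥ fun j => w (finSumFinEquiv (Sum.inr j))) := by
  rw [dot_reindex_sum]
  simp only [Fintype.sum_sum_type, dotProduct, mulVec, Matrix.fromBlocks_apply₁₁,
    Matrix.fromBlocks_apply₁₂, Matrix.fromBlocks_apply₂₁, Matrix.fromBlocks_apply₂₂,
    Matrix.zero_apply, zero_mul, mul_zero, Finset.sum_const_zero, add_zero, zero_add]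
  simp [Finset.mul_sum]

lemma block_norm_le {k m : ℕ} (w : Fin (k+m) → ℝ) :
    (fun j => w (finSumFinEquiv (Sum.inr j))) ⬝ᵥ (fun j => w (finSumFinEquiv (Sum.inr j)))
      ≤ w ⬝ᵥ w := by
  simp only [dotProduct]
  rw [(Fintype.sum_equiv finSumFinEquiv
    (fun a : Fin k ⊕ Fin m => w (finSumFinEquiv a) * w (finSumFinEquiv a))
    (fun i => w i * w i) (fun a => rfl)).symm]
  rw [Fintype.sum_sum_type]
  have h1 : (0:ℝ) ≤ ∑ a : Fin k,
      w (finSumFinEquiv (Sum.inl a : Fin k ⊕ Fin m)) * w (finSumFinEquiv (Sum.inl a)) :=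
    Finset.sum_nonneg fun i _ => mul_self_nonneg _
  linarith

lemma block_embed_rayleigh {k m : ℕ} (M : Matrix (Fin m) (Fin m) ℝ) (z : Fin m → ℝ) :
    ∃ w : Fin (k+m) → ℝ, w ⬝ᵥ w = z ⬝ᵥ z ∧
      w ⬝ᵥ ((Matrix.reindex finSumFinEquiv finSumFinEquiv
        (Matrix.fromBlocks (0 : Matrix (Fin k) (Fin k) ℝ) 0 0 M)) *ᵥ w) = z ⬝ᵥ (M *ᵥ z) := by
  refine ⟨fun i => Sum.elim 0 z (finSumFinEquiv.symm i), ?_, ?_⟩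
  · simp only [dotProduct]
    rw [(Fintype.sum_equiv finSumFinEquiv
      (fun a : Fin k ⊕ Fin m => Sum.elim (0 : Fin k → ℝ) z (finSumFinEquiv.symm (finSumFinEquiv a))
        * Sum.elim (0 : Fin k → ℝ) z (finSumFinEquiv.symm (finSumFinEquiv a)))
      _ (fun a => rfl)).symm]
    simp [Fintype.sum_sum_type]
  · rw [block_rayleigh]
    simp

lemma supEig_le_specNorm {m : ℕ} (hm : 0 < m) {S : Matrix (Fin m) (Fin m) ℝ}
    (hS : S.IsHermitian) :
    (⨆ j, hS.eigenvalues j) ≤ specNorm S := by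
  obtain ⟨j₀, hj₀⟩ := exists_max_eig hm hS
  rw [← hj₀]
  set v : Fin m → ℝ := ⇑(hS.eigenvectorBasis j₀) with hv
  have hvv : v ⬝ᵥ v = 1 := eigvec_dot_self hS j₀
  have h1 : v ⬝ᵥ ((Sᴴ * S) *ᵥ v) = (hS.eigenvalues j₀) ^ 2 := by
    rw [conjT_eq, ← Matrix.mulVec_mulVec, dotProduct_comm, transpose_mulVec_dot,
      hS.mulVec_eigenvectorBasis]
    simp only [← hv, dotProduct_smul, smul_dotProduct, smul_eq_mul, hvv]
    ring
  have h2 := rayleigh_le_supEig (Matrix.isHermitian_conjTranspose_mul_self S) v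
  rw [h1, hvv, mul_one] at h2
  calc hS.eigenvalues j₀ ≤ |hS.eigenvalues j₀| := le_abs_self _
    _ = Real.sqrt ((hS.eigenvalues j₀) ^ 2) := (Real.sqrt_sq_eq_abs _).symm
    _ ≤ specNorm S := Real.sqrt_le_sqrt h2

set_option maxHeartbeats 2000000 in
lemma eigDesc_le_of_subspace {k m : ℕ} (hm : 0 < m)
    {A : Matrix (Fin (k+m)) (Fin (k+m)) ℝ} (hAh : A.IsHermitian)
    (φ : (Fin (k+m) → ℝ) →ₗ[ℝ] (Fin k → ℝ)) (c : ℝ)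
    (h : ∀ x : Fin (k+m) → ℝ, φ x = 0 → x ⬝ᵥ (A *ᵥ x) ≤ c * (x ⬝ᵥ x)) :
    eigDesc hAh ⟨k, Nat.lt_add_of_pos_right hm⟩ ≤ c := by
  set s := Tuple.sort hAh.eigenvalues with hs
  set μ := eigDesc hAh ⟨k, by omega⟩ with hμdef
  have hμ' : μ = hAh.eigenvalues (s ⟨m - 1, by omega⟩) := by
    rw [hμdef, eigDesc]
    have : (⟨k, by omega⟩ : Fin (k+m)).rev = ⟨m - 1, by omega⟩ := by
      ext
      simp only [Fin.val_rev]
      omega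
    rw [this]
    rfl
  have hglt : ∀ j : Fin (k+1), m - 1 + (j : ℕ) < k + m := fun j => by
    have := j.2; omega
  set g : Fin (k+1) → Fin (k+m) := fun j => s ⟨m - 1 + j, hglt j⟩ with hg
  have hginj : Function.Injective g := by
    intro a b hab
    have h2 := s.injective hab
    rw [Fin.mk.injEq] at h2
    exact Fin.ext (by omega)
  have hgeig : ∀ j, μ ≤ hAh.eigenvalues (g j) := by
    intro j
    rw [hμ']
    exact Tuple.monotone_sort hAh.eigenvalues
      (show (⟨m - 1, by omega⟩ : Fin (k+m)) ≤ ⟨m - 1 + j, hglt j⟩ from by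
        rw [Fin.mk_le_mk]; omega)
  set b := hAh.eigenvectorBasis with hb
  set f : Fin (k+1) → EuclideanSpace ℝ (Fin (k+m)) := fun j => b (g j) with hf
  have hfli : LinearIndependent ℝ f := (b.orthonormal.linearIndependent).comp g hginj
  set W := Submodule.span ℝ (Set.range f) with hW
  have hWrank : Module.finrank ℝ W = k + 1 := by
    rw [hW, finrank_span_eq_card hfli, Fintype.card_fin]
  set ψ : EuclideanSpace ℝ (Fin (k+m)) →ₗ[ℝ] (Fin k → ℝ) :=
    φ ∘ₗ (WithLp.linearEquiv 2 ℝ (Fin (k+m) → ℝ)).toLinearMap with hψ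
  set V := LinearMap.ker ψ with hV
  have hVrank : m ≤ Module.finrank ℝ V := by
    have h1 := LinearMap.finrank_range_add_finrank_ker ψ
    rw [← hV] at h1
    have h2 : Module.finrank ℝ (LinearMap.range ψ) ≤ k := by
      have := Submodule.finrank_le (LinearMap.range ψ)
      simpa [Module.finrank_pi] using this
    rw [finrank_euclideanSpace, Fintype.card_fin] at h1
    omega
  have hint : 0 < Module.finrank ℝ (V ⊓ W : Submodule ℝ _) := by
    have h3 := Submodule.finrank_sup_add_finrank_inf_eq V W
    have h4 : Module.finrank ℝ (V ⊔ W : Submodule ℝ _) ≤ k + m := by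
      have := Submodule.finrank_le (V ⊔ W)
      simpa [finrank_euclideanSpace] using this
    omega
  have : Nontrivial (V ⊓ W : Submodule ℝ _) := Module.nontrivial_of_finrank_pos hint
  obtain ⟨x0, hx0⟩ := exists_ne (0 : (V ⊓ W : Submodule ℝ _))
  obtain ⟨hxV, hxW⟩ := x0.2
  have hxne : (x0 : EuclideanSpace ℝ (Fin (k+m))) ≠ 0 := by
    simpa [Submodule.coe_eq_zero] using hx0
  set x : Fin (k+m) → ℝ := (WithLp.equiv 2 _) (x0 : EuclideanSpace ℝ (Fin (k+m))) with hx
  -- coordinates vanish outside the range of g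
  have hcoord : ∀ j, j ∉ Set.range g → coord hAh x j = 0 := by
    intro j hj
    have hinner0 : ∀ y, y ∈ W → (inner ℝ (b j) y : ℝ) = 0 := by
      intro y hy
      refine Submodule.span_induction (p := fun z _ => (inner ℝ (b j) z : ℝ) = 0)
        ?_ (by simp) ?_ ?_ hy
      · rintro z ⟨j', rfl⟩
        exact b.orthonormal.2 (fun hjj => hj ⟨j', hjj.symm⟩)
      · intro y z _ _ ihy ihz
        rw [inner_add_right, ihy, ihz, add_zero]
      · intro a y _ ihy
        rw [inner_smul_right, ihy, mul_zero]
    have hinner : (inner ℝ (b j) (x0 : EuclideanSpace ℝ (Fin (k+m))) : ℝ) = 0 :=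
      hinner0 _ hxW
    rw [coord, ← hinner]
    simp [PiLp.inner_apply, dotProduct, RCLike.inner_apply, hx, mul_comm, hb]
  have hlow : μ * (x ⬝ᵥ x) ≤ x ⬝ᵥ (A *ᵥ x) := by
    rw [rayleigh_expand hAh, dot_self_eq_sum_coord hAh, Finset.mul_sum]
    apply Finset.sum_le_sum
    intro j _
    by_cases hj : j ∈ Set.range g
    · obtain ⟨j', rfl⟩ := hj
      exact mul_le_mul_of_nonneg_right (hgeig j') (sq_nonneg _)
    · rw [hcoord j hj]
      simp
  have hup : x ⬝ᵥ (A *ᵥ x) ≤ c * (x ⬝ᵥ x) := by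
    apply h
    have : ψ (x0 : EuclideanSpace ℝ (Fin (k+m))) = 0 := hxV
    simpa [hψ, hx] using this
  have hxx : 0 < x ⬝ᵥ x := by
    have hne : x ≠ 0 := by
      intro hzero
      apply hxne
      ext i
      exact congrFun hzero i
    obtain ⟨i, hi⟩ := Function.ne_iff.mp hne
    have : (0:ℝ) < x i * x i := by
      rcases lt_or_gt_of_ne (show x i ≠ 0 from by simpa using hi) with h' | h'
      · nlinarith
      · nlinarith
    refine Finset.sum_pos' (fun i _ => mul_self_nonneg _) ⟨i, Finset.mem_univ i, this⟩
  nlinarith [hlow, hup, hxx]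

lemma iSup_eig_congr {n : ℕ} {B C : Matrix (Fin n) (Fin n) ℝ} (h : B = C)
    (hB : B.IsHermitian) (hC : C.IsHermitian) :
    (⨆ j, hB.eigenvalues j) = ⨆ j, hC.eigenvalues j := by
  subst h; rfl

lemma supEig_nonneg {m : ℕ} (hm : 0 < m) {M : Matrix (Fin m) (Fin m) ℝ} (hM : M.PosSemidef) :
    0 ≤ ⨆ j, hM.isHermitian.eigenvalues j :=
  le_trans (hM.eigenvalues_nonneg ⟨0, hm⟩)
    (le_ciSup (Set.Finite.bddAbove (Set.finite_range _)) _)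

lemma supEig_block_eq {k m : ℕ} (hm : 0 < m) (M : Matrix (Fin m) (Fin m) ℝ)
    (hM : M.PosSemidef)
    (hB : (Matrix.reindex finSumFinEquiv finSumFinEquiv
      (Matrix.fromBlocks (0 : Matrix (Fin k) (Fin k) ℝ) 0 0 M)).IsHermitian) :
    (⨆ j, hB.eigenvalues j) = ⨆ j, hM.isHermitian.eigenvalues j := by
  have hM0 := supEig_nonneg hm hM
  apply le_antisymm
  · obtain ⟨w, hw1, hw2⟩ := exists_unit_rayleigh_eq_sup (by omega : 0 < k + m) hB
    rw [← hw2, block_rayleigh]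
    calc _ ≤ (⨆ j, hM.isHermitian.eigenvalues j) *
        ((fun j => w (finSumFinEquiv (Sum.inr j))) ⬝ᵥ fun j => w (finSumFinEquiv (Sum.inr j))) :=
          rayleigh_le_supEig hM.isHermitian _
      _ ≤ (⨆ j, hM.isHermitian.eigenvalues j) * 1 := by
          apply mul_le_mul_of_nonneg_left _ hM0
          rw [← hw1]
          exact block_norm_le w
      _ = _ := mul_one _
  · obtain ⟨z, hz1, hz2⟩ := exists_unit_rayleigh_eq_sup hm hM.isHermitian
    obtain ⟨w, hw1, hw2⟩ := block_embed_rayleigh (k := k) M z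
    rw [← hz2, ← hw2]
    calc _ ≤ (⨆ j, hB.eigenvalues j) * (w ⬝ᵥ w) := rayleigh_le_supEig hB w
      _ = _ := by rw [hw1, hz1, mul_one]

lemma permMatrix_mul_transpose {n : ℕ} (σ : Equiv.Perm (Fin n)) :
    σ.permMatrix ℝ * (σ.permMatrix ℝ)ᵀ = 1 := by
  ext i j
  simp only [Matrix.mul_apply, Matrix.transpose_apply, Equiv.Perm.permMatrix,
    PEquiv.toMatrix_apply, Equiv.toPEquiv_apply, Matrix.one_apply, Option.mem_def,
    Option.some_inj]
  simp only [ite_mul, one_mul, zero_mul, Finset.sum_ite_eq]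
  by_cases h : i = j
  · subst h; simp
  · simp [h, fun hc : σ j = σ i => h (σ.injective hc).symm, Ne.symm h]

/-- For a partial Cholesky factorization `Πᵀ A Π = L Lᵀ + [[0,0],[0,S]]` of a
symmetric positive semidefinite `A`, the approximation error satisfies
`‖Πᵀ A Π − L Lᵀ‖₂ = ‖S‖₂ ≥ λ_{k+1}(A)`. -/
theorem partial_cholesky_error_eq_schur_norm_ge_eig {k m : ℕ} (hm : 0 < m)
    (A : Matrix (Fin (k + m)) (Fin (k + m)) ℝ) (hA : A.PosSemidef)
    (σ : Equiv.Perm (Fin (k + m)))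
    (L : Matrix (Fin (k + m)) (Fin k) ℝ)
    (hLtri : ∀ i j : Fin k, i < j → L (Fin.castAdd m i) j = 0)
    (S : Matrix (Fin m) (Fin m) ℝ) (hS : S.PosSemidef)
    (hfact : (σ.permMatrix ℝ)ᵀ * A * σ.permMatrix ℝ =
      L * Lᵀ + (Matrix.reindex finSumFinEquiv finSumFinEquiv) (Matrix.fromBlocks 0 0 0 S)) :
    specNorm ((σ.permMatrix ℝ)ᵀ * A * σ.permMatrix ℝ - L * Lᵀ) = specNorm S ∧
    eigDesc hA.isHermitian ⟨k, by omega⟩ ≤ specNorm S := by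
  set P := σ.permMatrix ℝ with hP
  have hPPt : P * Pᵀ = 1 := permMatrix_mul_transpose σ
  have hE : Pᵀ * A * P - L * Lᵀ =
      Matrix.reindex finSumFinEquiv finSumFinEquiv (Matrix.fromBlocks 0 0 0 S) := by
    rw [hfact, add_sub_cancel_left]
  constructor
  · -- first part
    have hEtE : (Pᵀ * A * P - L * Lᵀ)ᴴ * (Pᵀ * A * P - L * Lᵀ) =
        Matrix.reindex finSumFinEquiv finSumFinEquiv
          (Matrix.fromBlocks (0 : Matrix (Fin k) (Fin k) ℝ) 0 0 (Sᴴ * S)) := by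
      rw [hE, conjT_eq]
      rw [Matrix.reindex_apply, Matrix.transpose_submatrix, Matrix.fromBlocks_transpose,
        Matrix.submatrix_mul_equiv, Matrix.fromBlocks_multiply]
      rw [Matrix.reindex_apply]
      congr 1
      simp [conjT_eq]
    unfold specNorm
    congr 1
    rw [iSup_eig_congr hEtE (Matrix.isHermitian_conjTranspose_mul_self _) (by rw [← hEtE]; exact Matrix.isHermitian_conjTranspose_mul_self _)]
    exact supEig_block_eq hm (Sᴴ * S) (Matrix.posSemidef_conjTranspose_mul_self S) _
  · -- second part
    have hc0 : 0 ≤ ⨆ j, hS.isHermitian.eigenvalues j := supEig_nonneg hm hS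
    refine le_trans (eigDesc_le_of_subspace hm hA.isHermitian
      (Matrix.mulVecLin (Lᵀ * Pᵀ)) (⨆ j, hS.isHermitian.eigenvalues j) ?_)
      (supEig_le_specNorm hm hS.isHermitian)
    intro x hx
    rw [Matrix.mulVecLin_apply, ← Matrix.mulVec_mulVec] at hx
    set y : Fin (k + m) → ℝ := Pᵀ *ᵥ x with hy
    have hPy : P *ᵥ y = x := by
      rw [hy, Matrix.mulVec_mulVec, hPPt, Matrix.one_mulVec]
    have hyy : y ⬝ᵥ y = x ⬝ᵥ x := by
      rw [hy, transpose_mulVec_dot, ← hy, hPy]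
    have h1 : x ⬝ᵥ (A *ᵥ x) = y ⬝ᵥ ((Pᵀ * A * P) *ᵥ y) := by
      rw [Matrix.mul_assoc, ← Matrix.mulVec_mulVec, dotProduct_comm y,
        transpose_mulVec_dot, hPy, ← Matrix.mulVec_mulVec, hPy, dotProduct_comm]
    rw [h1, hfact, Matrix.add_mulVec, dotProduct_add]
    have h2 : (L * Lᵀ) *ᵥ y = 0 := by
      rw [← Matrix.mulVec_mulVec, hx, Matrix.mulVec_zero]
    rw [h2, dotProduct_zero, zero_add, block_rayleigh]
    calc _ ≤ (⨆ j, hS.isHermitian.eigenvalues j) *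
        ((fun j => y (finSumFinEquiv (Sum.inr j))) ⬝ᵥ fun j => y (finSumFinEquiv (Sum.inr j))) :=
          rayleigh_le_supEig hS.isHermitian _
      _ ≤ (⨆ j, hS.isHermitian.eigenvalues j) * (x ⬝ᵥ x) := by
          apply mul_le_mul_of_nonneg_left _ hc0
          rw [← hyy]
          exact block_norm_le y
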